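/- Let f belong to CW²_Δ[−1,1] with constant M₂, let h = max_{0≤k≤N−1} h_k, and let r_N = S_N − f be the spline interpolation error. Then r_N satisfies the Lipschitz condition |r_N(t) − r_N(t′)| ≤ M₂·h·|t − t′| for all t, t′ ∈ [−1,1]. -/

import Mathlib

open Real MeasureTheory Filter Topology

theorem spline_remainder_lipschitz_CW2
    (N : ℕ) (hN : 1 ≤ N)
    (t : ℕ → ℝ) (ht0 : t 0 = -1) (htN : t N = 1)
    (hmono : ∀ k, k < N → t k < t (k + 1))
    (f S : ℝ → ℝ) (M₂ : ℝ)
    (hfc : ContinuousOn f (Set.Icc (-1 : ℝ) 1))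
    (hf : ∀ k, k < N → ∃ g : ℝ → ℝ,
      (∀ u ∈ Set.Icc (t k) (t (k + 1)),
        HasDerivWithinAt f (g u) (Set.Icc (t k) (t (k + 1))) u) ∧
      (∀ u ∈ Set.Icc (t k) (t (k + 1)), ∀ v ∈ Set.Icc (t k) (t (k + 1)),
        |g u - g v| ≤ M₂ * |u - v|))
    (hS : ∀ k, k < N → ∀ u ∈ Set.Icc (t k) (t (k + 1)),
      S u = ((t (k + 1) - u) * f (t k) + (u - t k) * f (t (k + 1))) / (t (k + 1) - t k))
    (h : ℝ)
    (hmax : h = (Finset.range N).sup' (Finset.nonempty_range_iff.mpr (by omega))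
      (fun k => t (k + 1) - t k))
    (u : ℝ) (hu : u ∈ Set.Icc (-1 : ℝ) 1) (v : ℝ) (hv : v ∈ Set.Icc (-1 : ℝ) 1) :
    |(S u - f u) - (S v - f v)| ≤ M₂ * h * |u - v| := by
  set C := M₂ * h with hC
  -- monotonicity of nodes
  have tmono : ∀ i j, i ≤ j → j ≤ N → t i ≤ t j := by
    intro i j hij hjN
    induction j with
    | zero => interval_cases i; rfl
    | succ m ih =>
      rcases Nat.lt_or_ge i (m + 1) with hlt | hge
      · exact le_trans (ih (by omega) (by omega)) (hmono m (by omega)).le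
      · have : i = m + 1 := by omega
        simp [this]
  -- M₂ ≥ 0
  have hM2 : 0 ≤ M₂ := by
    obtain ⟨g, hg, hlip⟩ := hf 0 hN
    have h01 := hmono 0 hN
    have h1 := hlip (t 0) ⟨le_refl _, h01.le⟩ (t 1) ⟨h01.le, le_refl _⟩
    have h2 : 0 ≤ |g (t 0) - g (t 1)| := abs_nonneg _
    have h3 : |t 0 - t 1| = t 1 - t 0 := by rw [abs_sub_comm]; exact abs_of_pos (by linarith)
    nlinarith
  -- step sizes bounded by h
  have hk_le : ∀ k, k < N → t (k + 1) - t k ≤ h := by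
    intro k hk
    rw [hmax]
    exact Finset.le_sup' (fun k => t (k + 1) - t k) (Finset.mem_range.mpr hk)
  have hpos : 0 < h := lt_of_lt_of_le (by linarith [hmono 0 hN]) (hk_le 0 hN)
  have hCnn : 0 ≤ C := mul_nonneg hM2 hpos.le
  -- piecewise Lipschitz
  have pieceLip : ∀ k, k < N → ∀ x ∈ Set.Icc (t k) (t (k + 1)),
      ∀ y ∈ Set.Icc (t k) (t (k + 1)),
      |(S x - f x) - (S y - f y)| ≤ C * |x - y| := by
    intro k hk
    obtain ⟨g, hg, hlip⟩ := hf k hk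
    have hab : t k < t (k + 1) := hmono k hk
    have hsub : Set.Icc (t k) (t (k + 1)) ⊆ Set.Icc (-1 : ℝ) 1 := by
      intro x hx
      constructor
      · rw [← ht0]; exact le_trans (tmono 0 k (by omega) (by omega)) hx.1
      · rw [← htN]; exact le_trans hx.2 (tmono (k + 1) N (by omega) le_rfl)
    have hint : ∀ x ∈ Set.Ioo (t k) (t (k + 1)), HasDerivAt f (g x) x := fun x hx =>
      (hg x (Set.Ioo_subset_Icc_self hx)).hasDerivAt (Icc_mem_nhds hx.1 hx.2)
    obtain ⟨ξ, hξ, hξeq⟩ := exists_hasDerivAt_eq_slope f g hab (hfc.mono hsub) hint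
    set slope := (f (t (k + 1)) - f (t k)) / (t (k + 1) - t k) with hslope
    have hr : ∀ x ∈ Set.Icc (t k) (t (k + 1)),
        HasDerivWithinAt (fun z => S z - f z) (slope - g x) (Set.Icc (t k) (t (k + 1))) x := by
      intro x hx
      have hA : HasDerivAt
          (fun z => ((t (k + 1) - z) * f (t k) + (z - t k) * f (t (k + 1))) / (t (k + 1) - t k))
          slope x := by
        have h0 : HasDerivAt
            (fun z => ((t (k + 1) - z) * f (t k) + (z - t k) * f (t (k + 1))))
            (f (t (k + 1)) - f (t k)) x := by
          have := (((hasDerivAt_id x).const_sub (t (k + 1))).mul_const (f (t k))).add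
            (((hasDerivAt_id x).sub_const (t k)).mul_const (f (t (k + 1))))
          convert this using 1
          all_goals first | rfl | ring
        simpa [hslope, div_eq_mul_inv] using h0.div_const (t (k + 1) - t k)
      have hA' : HasDerivWithinAt S slope (Set.Icc (t k) (t (k + 1))) x :=
        (hA.hasDerivWithinAt).congr (fun z hz => hS k hk z hz) (hS k hk x hx)
      exact hA'.sub (hg x hx)
    have hbound : ∀ x ∈ Set.Icc (t k) (t (k + 1)), ‖slope - g x‖ ≤ C := by
      intro x hx
      rw [Real.norm_eq_abs, ← hξeq]
      calc |g ξ - g x| ≤ M₂ * |ξ - x| := hlip ξ (Set.Ioo_subset_Icc_self hξ) x hx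
        _ ≤ M₂ * (t (k + 1) - t k) := by
            apply mul_le_mul_of_nonneg_left _ hM2
            rw [abs_le]
            constructor <;> [linarith [hξ.1, hξ.2, hx.1, hx.2]; linarith [hξ.1, hξ.2, hx.1, hx.2]]
        _ ≤ M₂ * h := mul_le_mul_of_nonneg_left (hk_le k hk) hM2
    intro x hx y hy
    have := (convex_Icc (t k) (t (k + 1))).norm_image_sub_le_of_norm_hasDerivWithin_le
      hr hbound hy hx
    simpa [Real.norm_eq_abs] using this
  -- gluing by induction
  have key : ∀ m, m ≤ N → ∀ x ∈ Set.Icc (t 0) (t m), ∀ y ∈ Set.Icc (t 0) (t m),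
      x ≤ y → |(S x - f x) - (S y - f y)| ≤ C * |x - y| := by
    intro m
    induction m with
    | zero =>
      intro _ x hx y hy _
      have : x = y := le_antisymm (hx.2.trans hy.1) (hy.2.trans hx.1)
      simp [this]
    | succ m ih =>
      intro hm x hx y hy hxy
      rcases le_total (t m) x with h1 | h1
      · exact pieceLip m (by omega) x ⟨h1, hx.2⟩ y ⟨le_trans h1 hxy, hy.2⟩
      · rcases le_total y (t m) with h2 | h2
        · exact ih (by omega) x ⟨hx.1, h1⟩ y ⟨hy.1, h2⟩ hxy
        · have hx' := ih (by omega) x ⟨hx.1, h1⟩ (t m)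
            ⟨tmono 0 m (by omega) (by omega), le_refl _⟩ h1
          have hy' := pieceLip m (by omega) (t m) ⟨le_refl _, (hmono m (by omega)).le⟩
            y ⟨h2, hy.2⟩
          have e1 : |x - t m| = t m - x := by rw [abs_sub_comm]; exact abs_of_nonneg (by linarith)
          have e2 : |t m - y| = y - t m := by rw [abs_sub_comm]; exact abs_of_nonneg (by linarith)
          have e3 : |x - y| = y - x := by rw [abs_sub_comm]; exact abs_of_nonneg (by linarith)
          rw [e1] at hx'; rw [e2] at hy'; rw [e3]
          calc |(S x - f x) - (S y - f y)|
              ≤ |(S x - f x) - (S (t m) - f (t m))| + |(S (t m) - f (t m)) - (S y - f y)| := by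
                exact abs_sub_le _ _ _
            _ ≤ C * (t m - x) + C * (y - t m) := add_le_add hx' hy'
            _ = C * (y - x) := by ring
  have hu' : u ∈ Set.Icc (t 0) (t N) := by rw [ht0, htN]; exact hu
  have hv' : v ∈ Set.Icc (t 0) (t N) := by rw [ht0, htN]; exact hv
  rcases le_total u v with huv | huv
  · exact key N le_rfl u hu' v hv' huv
  · rw [show S u - f u - (S v - f v) = -(S v - f v - (S u - f u)) by ring, abs_neg,
      abs_sub_comm u v]
    exact key N le_rfl v hv' u hu' huv
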